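/- Let M_1, M_2 be closed affine subspaces of a real Hilbert space H with M := M_1 ∩ M_2 nonempty, and let T := T_{M_2,M_1} T_{M_1,M_2}, where T_{C_1,C_2} := (1/2)(I + R_{C_2} R_{C_1}). Given x_0 ∈ H, set z_0 := T(x_0) and z_{k+1} := z_k + t_k (T(z_k) − z_k), where t_k := 1/2 + (‖z_k − T_{M_1,M_2}(z_k)‖² + ‖T_{M_1,M_2}(z_k) − T(z_k)‖²)/(2‖z_k − T(z_k)‖²) if T(z_k) ≠ z_k and t_k := 1 otherwise. Then for every k ∈ ℕ, ‖z_k − P_{Fix T}(x_0)‖ ≤ ‖T^{k+1}(x_0) − P_{Fix T}(x_0)‖, and moreover max{‖P_{M_1}(z_k) − P_M(x_0)‖, ‖P_{M_2}(z_k) − P_M(x_0)‖} ≤ ‖z_k − P_{Fix T}(x_0)‖. -/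

import Mathlib

open RealInnerProductSpace

set_option linter.unusedSectionVars false
set_option linter.unusedVariables false
set_option maxHeartbeats 4000000

section helpersAll
variable {H : Type*} [NormedAddCommGroup H] [InnerProductSpace ℝ H]

private lemma perp_of_min' {x p s : H}
    (hmin : ∀ ε : ℝ, ‖x - p‖ ≤ ‖x - (p + ε • s)‖) : ⟪x - p, s⟫ = 0 := by
  set v := x - p with hv
  have key : ∀ ε : ℝ, 0 ≤ ε ^ 2 * ‖s‖ ^ 2 - 2 * ε * ⟪v, s⟫ := by
    intro ε
    have h3 : x - (p + ε • s) = v - ε • s := by rw [hv]; abel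
    have h2 : ‖v‖ ^ 2 ≤ ‖v - ε • s‖ ^ 2 := by
      rw [← h3]; exact pow_le_pow_left₀ (norm_nonneg _) (hmin ε) 2
    have hexp : ‖v - ε • s‖ ^ 2 = ‖v‖ ^ 2 - 2 * (ε * ⟪v, s⟫) + ‖ε • s‖ ^ 2 := by
      rw [norm_sub_sq_real, real_inner_smul_right]
    have h5 : (‖ε • s‖ : ℝ) ^ 2 = ε ^ 2 * ‖s‖ ^ 2 := by
      rw [norm_smul, mul_pow]; simp [sq_abs]
    nlinarith [h2, hexp, h5]
  by_cases hs : s = 0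
  · simp [hs]
  · have ha : 0 < ‖s‖ ^ 2 := by
      have : 0 < ‖s‖ := norm_pos_iff.mpr hs
      positivity
    set b := ⟪v, s⟫ with hb
    have hk := key (b / ‖s‖ ^ 2)
    have e : (b / ‖s‖ ^ 2) ^ 2 * ‖s‖ ^ 2 - 2 * (b / ‖s‖ ^ 2) * b = -(b ^ 2) / ‖s‖ ^ 2 := by
      field_simp; ring
    rw [e] at hk
    have h6 : 0 ≤ (-(b ^ 2) / ‖s‖ ^ 2) * ‖s‖ ^ 2 := mul_nonneg hk ha.le
    have h7 : (-(b ^ 2) / ‖s‖ ^ 2) * ‖s‖ ^ 2 = -(b ^ 2) := by field_simp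
    rw [h7] at h6
    nlinarith [sq_nonneg b]

private lemma iter_sa' (bb : H → H) (hsa : ∀ x y, ⟪bb x, y⟫ = ⟪x, bb y⟫) :
    ∀ (j : ℕ) (x y : H), ⟪bb^[j] x, y⟫ = ⟪x, bb^[j] y⟫ := by
  intro j
  induction j with
  | zero => intro x y; simp
  | succ n ih =>
    intro x y
    rw [Function.iterate_succ_apply, ih (bb x) y, hsa, ← Function.iterate_succ_apply' bb n y]

private lemma iter_comb' (bb : H → H)
    (hadd : ∀ x y, bb (x + y) = bb x + bb y)
    (hsmul : ∀ (a : ℝ) x, bb (a • x) = a • bb x) :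
    ∀ (j : ℕ) (a b : ℝ) (x y : H),
      bb^[j] (a • x + b • y) = a • bb^[j] x + b • bb^[j] y := by
  intro j
  induction j with
  | zero => intro a b x y; simp
  | succ n ih =>
    intro a b x y
    rw [Function.iterate_succ_apply, hadd, hsmul, hsmul, ih,
      ← Function.iterate_succ_apply, ← Function.iterate_succ_apply]

private lemma iter_mono' (bb : H → H)
    (hsa : ∀ x y, ⟪bb x, y⟫ = ⟪x, bb y⟫)
    (hb1 : ∀ x, ⟪x, bb x⟫ ≤ ‖x‖ ^ 2)
    (hb2 : ∀ x, ‖bb x‖ ^ 2 ≤ ⟪x, bb x⟫) :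
    ∀ (j : ℕ) (y : H), ⟪y, bb^[j + 1] y⟫ ≤ ⟪y, bb^[j] y⟫ := by
  intro j
  induction j using Nat.twoStepInduction with
  | zero => intro y; simpa [real_inner_self_eq_norm_sq] using hb1 y
  | one =>
    intro y
    have h1 : ⟪y, bb^[1 + 1] y⟫ = ‖bb y‖ ^ 2 := by
      rw [Function.iterate_succ_apply', Function.iterate_one, ← hsa,
        real_inner_self_eq_norm_sq]
    rw [h1]
    simpa using hb2 y
  | more n ih _ =>
    intro y
    have e1 : ∀ m : ℕ, ⟪y, bb^[m + 2] y⟫ = ⟪bb y, bb^[m] (bb y)⟫ := by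
      intro m
      rw [show bb^[m + 2] y = bb^[m + 1] (bb y) from Function.iterate_succ_apply bb (m + 1) y,
        show bb^[m + 1] (bb y) = bb (bb^[m] (bb y)) from Function.iterate_succ_apply' bb m (bb y),
        ← hsa]
    rw [show n + 2 + 1 = (n + 1) + 2 from rfl, e1 (n + 1), e1 n]
    exact ih (bb y)

private lemma lemL (bb : H → H)
    (hadd : ∀ x y, bb (x + y) = bb x + bb y)
    (hsmul : ∀ (a : ℝ) x, bb (a • x) = a • bb x)
    (hsa : ∀ x y, ⟪bb x, y⟫ = ⟪x, bb y⟫)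
    (hb1 : ∀ x, ⟪x, bb x⟫ ≤ ‖x‖ ^ 2)
    (hb2 : ∀ x, ‖bb x‖ ^ 2 ≤ ⟪x, bb x⟫)
    (u : H) (tt : ℝ) (hδ : u - bb u ≠ 0)
    (htt : tt * ‖u - bb u‖ ^ 2 = ⟪u, u - bb u⟫) :
    ∀ j, ⟪u - tt • (u - bb u), bb^[j] (u - tt • (u - bb u))⟫ ≤ ⟪bb u, bb^[j] (bb u)⟫ := by
  set m : ℕ → ℝ := fun j => ⟪u, bb^[j] u⟫ with hm
  have hcomb := iter_comb' bb hadd hsmul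
  have hm0 : ∀ j, ⟪u, bb^[j] u⟫ = m j := fun j => rfl
  have hmB : ∀ j, ⟪bb u, bb^[j] u⟫ = m (j + 1) := by
    intro j
    rw [hsa, show bb (bb^[j] u) = bb^[j + 1] u from (Function.iterate_succ_apply' bb j u).symm]
  have hmC : ∀ j, ⟪u, bb^[j] (bb u)⟫ = m (j + 1) := by
    intro j
    rw [show bb^[j] (bb u) = bb^[j + 1] u from (Function.iterate_succ_apply bb j u).symm]
  have hmD : ∀ j, ⟪bb u, bb^[j] (bb u)⟫ = m (j + 2) := by
    intro j
    rw [hsa,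
      show bb (bb^[j] (bb u)) = bb^[j + 1] (bb u) from
        (Function.iterate_succ_apply' bb j (bb u)).symm,
      show bb^[j + 1] (bb u) = bb^[j + 2] u from (Function.iterate_succ_apply bb (j + 1) u).symm]
  have hu' : u - tt • (u - bb u) = (1 - tt) • u + tt • (bb u) := by
    rw [smul_sub, sub_smul, one_smul]; abel
  have hexp : ∀ j, ⟪u - tt • (u - bb u), bb^[j] (u - tt • (u - bb u))⟫
      = (1 - tt) ^ 2 * m j + 2 * ((1 - tt) * tt) * m (j + 1) + tt ^ 2 * m (j + 2) := by
    intro j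
    rw [hu', hcomb j (1 - tt) tt u (bb u)]
    simp only [inner_add_left, inner_add_right, real_inner_smul_left, real_inner_smul_right]
    rw [hm0 j, hmB j, hmC j, hmD j]
    ring
  have hmz : m 0 = ⟪u, u⟫ := by rw [← hm0 0]; simp
  have hm1 : m 1 = ⟪u, bb u⟫ := by rw [← hm0 1]; simp
  have hm2 : m 2 = ⟪bb u, bb u⟫ := by rw [← hmD 0]; simp
  have hd2 : ‖u - bb u‖ ^ 2 = m 0 - 2 * m 1 + m 2 := by
    rw [← real_inner_self_eq_norm_sq, inner_sub_left, inner_sub_right, inner_sub_right]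
    have h1 : ⟪bb u, u⟫ = m 1 := by rw [real_inner_comm, ← hm1]
    rw [h1, ← hmz, ← hm1, ← hm2]; ring
  have hm01 : ⟪u, u - bb u⟫ = m 0 - m 1 := by
    rw [inner_sub_right, ← hmz, ← hm1]
  have htm : tt * (m 0 - 2 * m 1 + m 2) = m 0 - m 1 := by rw [← hd2, ← hm01]; exact htt
  have hd2' : 0 < m 0 - 2 * m 1 + m 2 := by
    rw [← hd2]
    have : 0 < ‖u - bb u‖ := norm_pos_iff.mpr hδ
    positivity
  have hb2u : m 2 ≤ m 1 := by
    have := hb2 u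
    rw [real_inner_self_eq_norm_sq] at hm2
    rw [← hm1] at this
    linarith [hm2 ▸ this]
  have ht1 : 1 ≤ tt := by
    by_contra hcon
    push_neg at hcon
    nlinarith [mul_pos (sub_pos.mpr hcon) hd2', htm, hb2u]
  have ht2 : 0 ≤ tt ^ 2 - 1 := by nlinarith
  have htpos : 0 < (tt + 1) ^ 2 := by nlinarith
  suffices hc : ∀ j, (1 - tt) ^ 2 * m j + 2 * ((1 - tt) * tt) * m (j + 1)
      + (tt ^ 2 - 1) * m (j + 2) ≤ 0 by
    intro j
    rw [hexp j, hmD j]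
    linarith [hc j]
  intro j
  induction j with
  | zero =>
    have key : (1 - tt) ^ 2 * m 0 + 2 * ((1 - tt) * tt) * m 1 + (tt ^ 2 - 1) * m 2
        = (tt ^ 2 - 1) * (m 0 - 2 * m 1 + m 2) - 2 * (tt - 1) * (m 0 - m 1) := by ring
    rw [key, ← htm]
    nlinarith [mul_nonneg (sq_nonneg (tt - 1)) hd2'.le]
  | succ n ih =>
    set y : H := (tt + 1) • bb u + (-(tt - 1)) • u with hy
    have hE : ∀ i, ⟪y, bb^[i] y⟫
        = (tt + 1) ^ 2 * m (i + 2) - 2 * ((tt + 1) * (tt - 1)) * m (i + 1)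
          + (tt - 1) ^ 2 * m i := by
      intro i
      rw [hy, hcomb i (tt + 1) (-(tt - 1)) (bb u) u]
      simp only [inner_add_left, inner_add_right, real_inner_smul_left, real_inner_smul_right]
      rw [hm0 i, hmB i, hmC i, hmD i]
      ring
    have hEn := iter_mono' bb hsa hb1 hb2 n y
    rw [hE n, hE (n + 1)] at hEn
    have hid : (tt + 1) ^ 2 * ((1 - tt) ^ 2 * m (n + 1) + 2 * ((1 - tt) * tt) * m (n + 1 + 1)
          + (tt ^ 2 - 1) * m (n + 1 + 2))
        = (tt ^ 2 - 1) * ((1 - tt) ^ 2 * m n + 2 * ((1 - tt) * tt) * m (n + 1)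
            + (tt ^ 2 - 1) * m (n + 2))
          - (tt ^ 2 - 1) * (((tt + 1) ^ 2 * m (n + 2) - 2 * ((tt + 1) * (tt - 1)) * m (n + 1)
              + (tt - 1) ^ 2 * m n)
            - ((tt + 1) ^ 2 * m (n + 1 + 2) - 2 * ((tt + 1) * (tt - 1)) * m (n + 1 + 1)
              + (tt - 1) ^ 2 * m (n + 1))) := by
      push_cast [show n + 1 + 1 = n + 2 from rfl, show n + 1 + 2 = n + 3 from rfl]
      ring
    have h1 : (tt ^ 2 - 1) * ((1 - tt) ^ 2 * m n + 2 * ((1 - tt) * tt) * m (n + 1)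
        + (tt ^ 2 - 1) * m (n + 2)) ≤ 0 := mul_nonpos_of_nonneg_of_nonpos ht2 ih
    have h2 : 0 ≤ (tt ^ 2 - 1) * (((tt + 1) ^ 2 * m (n + 2)
        - 2 * ((tt + 1) * (tt - 1)) * m (n + 1) + (tt - 1) ^ 2 * m n)
        - ((tt + 1) ^ 2 * m (n + 1 + 2) - 2 * ((tt + 1) * (tt - 1)) * m (n + 1 + 1)
          + (tt - 1) ^ 2 * m (n + 1))) := by
      apply mul_nonneg ht2
      linarith [hEn]
    by_contra hcon
    push_neg at hcon
    nlinarith [mul_pos htpos hcon, hid, h1, h2]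

/-- `P` fixes points of `S`. -/
private lemma proj_self {S : Set H} {P : H → H} (hP : ∀ x, P x ∈ S ∧ ∀ y ∈ S, ‖x - P x‖ ≤ ‖x - y‖)
    {y : H} (hy : y ∈ S) : P y = y := by
  have h2 := (hP y).2 y hy
  simp only [sub_self, norm_zero] at h2
  have h3 : ‖y - P y‖ = 0 := le_antisymm h2 (norm_nonneg _)
  exact (sub_eq_zero.mp (norm_eq_zero.mp h3)).symm

private lemma proj_orth {S : AffineSubspace ℝ H} {P : H → H}
    (hP : ∀ x, P x ∈ (S : Set H) ∧ ∀ y ∈ (S : Set H), ‖x - P x‖ ≤ ‖x - y‖)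
    (x : H) {w : H} (hw : w ∈ S.direction) : ⟪x - P x, w⟫ = 0 := by
  apply perp_of_min'
  intro ε
  have h1 : (ε • w) +ᵥ (P x) ∈ S := by
    refine AffineSubspace.vadd_mem_of_mem_direction (S.direction.smul_mem ε hw) ?_
    exact (hP x).1
  have hmem : P x + ε • w ∈ (S : Set H) := by
    simpa [vadd_eq_add, add_comm] using h1
  exact (hP x).2 _ hmem

private lemma proj_dir {S : AffineSubspace ℝ H} {P : H → H}
    (hP : ∀ x, P x ∈ (S : Set H) ∧ ∀ y ∈ (S : Set H), ‖x - P x‖ ≤ ‖x - y‖)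
    {c : H} (hc : c ∈ (S : Set H)) (v : H) : P (c + v) - c ∈ S.direction := by
  have := AffineSubspace.vsub_mem_direction ((hP (c + v)).1 : (P (c+v)) ∈ S) (hc : c ∈ S)
  simpa [vsub_eq_sub] using this

private lemma proj_orth' {S : AffineSubspace ℝ H} {P : H → H}
    (hP : ∀ x, P x ∈ (S : Set H) ∧ ∀ y ∈ (S : Set H), ‖x - P x‖ ≤ ‖x - y‖)
    {c : H} (v : H) {w : H} (hw : w ∈ S.direction) : ⟪v - (P (c + v) - c), w⟫ = 0 := by
  have h1 := proj_orth hP (c + v) hw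
  have h2 : c + v - P (c + v) = v - (P (c + v) - c) := by abel
  rw [h2] at h1
  exact h1

private lemma proj_uniq {S : AffineSubspace ℝ H} {P : H → H}
    (hP : ∀ x, P x ∈ (S : Set H) ∧ ∀ y ∈ (S : Set H), ‖x - P x‖ ≤ ‖x - y‖)
    {c : H} (hc : c ∈ (S : Set H)) {v d : H} (hd : d ∈ S.direction)
    (hperp : ∀ w ∈ S.direction, ⟪v - d, w⟫ = 0) : d = P (c + v) - c := by
  have hmem : d - (P (c + v) - c) ∈ S.direction :=
    Submodule.sub_mem _ hd (proj_dir hP hc v)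
  have e1 := hperp _ hmem
  have e2 := proj_orth' hP (c := c) v hmem
  have e3 : ⟪d - (P (c + v) - c), d - (P (c + v) - c)⟫ = 0 := by
    have h4 : d - (P (c + v) - c) = (v - (P (c + v) - c)) - (v - d) := by abel
    calc ⟪d - (P (c + v) - c), d - (P (c + v) - c)⟫
        = ⟪(v - (P (c + v) - c)) - (v - d), d - (P (c + v) - c)⟫ := by rw [← h4]
      _ = ⟪v - (P (c + v) - c), d - (P (c + v) - c)⟫
          - ⟪v - d, d - (P (c + v) - c)⟫ := inner_sub_left _ _ _
      _ = 0 := by rw [e1, e2, sub_zero]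
  exact sub_eq_zero.mp (inner_self_eq_zero.mp e3)


-- now the q-level lemmas
private lemma proj_q_add {S : AffineSubspace ℝ H} {P : H → H}
    (hP : ∀ x, P x ∈ (S : Set H) ∧ ∀ y ∈ (S : Set H), ‖x - P x‖ ≤ ‖x - y‖)
    {c : H} (hc : c ∈ (S : Set H)) (u v : H) :
    P (c + (u + v)) - c = (P (c + u) - c) + (P (c + v) - c) := by
  refine (proj_uniq hP hc  (Submodule.add_mem _ (proj_dir hP hc u) (proj_dir hP hc v)) ?_).symm
  intro w hw
  have h1 : (u + v) - ((P (c + u) - c) + (P (c + v) - c))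
      = (u - (P (c + u) - c)) + (v - (P (c + v) - c)) := by abel
  rw [h1, inner_add_left, proj_orth' hP u hw, proj_orth' hP v hw, add_zero]

private lemma proj_q_smul {S : AffineSubspace ℝ H} {P : H → H}
    (hP : ∀ x, P x ∈ (S : Set H) ∧ ∀ y ∈ (S : Set H), ‖x - P x‖ ≤ ‖x - y‖)
    {c : H} (hc : c ∈ (S : Set H)) (a : ℝ) (v : H) :
    P (c + a • v) - c = a • (P (c + v) - c) := by
  refine (proj_uniq hP hc (Submodule.smul_mem _ a (proj_dir hP hc v)) ?_).symm
  intro w hw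
  have h1 : a • v - a • (P (c + v) - c) = a • (v - (P (c + v) - c)) := by
    module
  rw [h1, real_inner_smul_left, proj_orth' hP v hw, mul_zero]

private lemma proj_q_idem {S : AffineSubspace ℝ H} {P : H → H}
    (hP : ∀ x, P x ∈ (S : Set H) ∧ ∀ y ∈ (S : Set H), ‖x - P x‖ ≤ ‖x - y‖)
    {c : H} (hc : c ∈ (S : Set H)) (v : H) :
    P (c + (P (c + v) - c)) - c = P (c + v) - c := by
  have h1 : c + (P (c + v) - c) = P (c + v) := by abel
  rw [h1, proj_self hP (hP (c + v)).1]

private lemma proj_q_sa {S : AffineSubspace ℝ H} {P : H → H}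
    (hP : ∀ x, P x ∈ (S : Set H) ∧ ∀ y ∈ (S : Set H), ‖x - P x‖ ≤ ‖x - y‖)
    {c : H} (hc : c ∈ (S : Set H)) (u v : H) :
    ⟪P (c + u) - c, v⟫ = ⟪u, P (c + v) - c⟫ := by
  have e1 : ⟪P (c + u) - c, v - (P (c + v) - c)⟫ = 0 := by
    rw [real_inner_comm]
    exact proj_orth' hP v (proj_dir hP hc u)
  have e2 : ⟪u - (P (c + u) - c), P (c + v) - c⟫ = 0 :=
    proj_orth' hP u (proj_dir hP hc v)
  have h1 : ⟪P (c + u) - c, v⟫ = ⟪P (c + u) - c, P (c + v) - c⟫ := by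
    have := inner_sub_right (𝕜 := ℝ) (P (c + u) - c) v (P (c + v) - c)
    rw [e1] at this
    linarith [this]
  have h2 : ⟪u, P (c + v) - c⟫ = ⟪P (c + u) - c, P (c + v) - c⟫ := by
    have := inner_sub_left (𝕜 := ℝ) u (P (c + u) - c) (P (c + v) - c)
    rw [e2] at this
    linarith [this]
  rw [h1, h2]

private lemma proj_q_inner_self {S : AffineSubspace ℝ H} {P : H → H}
    (hP : ∀ x, P x ∈ (S : Set H) ∧ ∀ y ∈ (S : Set H), ‖x - P x‖ ≤ ‖x - y‖)
    {c : H} (hc : c ∈ (S : Set H)) (v : H) :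
    ⟪v, P (c + v) - c⟫ = ‖P (c + v) - c‖ ^ 2 := by
  have e2 : ⟪v - (P (c + v) - c), P (c + v) - c⟫ = 0 :=
    proj_orth' hP v (proj_dir hP hc v)
  have := inner_sub_left (𝕜 := ℝ) v (P (c + v) - c) (P (c + v) - c)
  rw [e2] at this
  rw [← real_inner_self_eq_norm_sq]
  linarith [this]

private lemma proj_q_pyth {S : AffineSubspace ℝ H} {P : H → H}
    (hP : ∀ x, P x ∈ (S : Set H) ∧ ∀ y ∈ (S : Set H), ‖x - P x‖ ≤ ‖x - y‖)
    {c : H} (hc : c ∈ (S : Set H)) (v : H) :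
    ‖P (c + v) - c‖ ^ 2 + ‖v - (P (c + v) - c)‖ ^ 2 = ‖v‖ ^ 2 := by
  have e2 : ⟪P (c + v) - c, v - (P (c + v) - c)⟫ = 0 := by
    rw [real_inner_comm]; exact proj_orth' hP v (proj_dir hP hc v)
  have h1 : v = (P (c + v) - c) + (v - (P (c + v) - c)) := by abel
  calc ‖P (c + v) - c‖ ^ 2 + ‖v - (P (c + v) - c)‖ ^ 2
      = ‖(P (c + v) - c) + (v - (P (c + v) - c))‖ ^ 2 := by
        rw [norm_add_sq_real, e2]; ring
    _ = ‖v‖ ^ 2 := by rw [← h1]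


-- reflection layer: r = 2q - id
private lemma refl_sa {q : H → H} (hqsa : ∀ u v, ⟪q u, v⟫ = ⟪u, q v⟫) (u v : H) :
    ⟪(2:ℝ) • q u - u, v⟫ = ⟪u, (2:ℝ) • q v - v⟫ := by
  rw [inner_sub_left, inner_sub_right, real_inner_smul_left, real_inner_smul_right, hqsa]

private lemma refl_invol {q : H → H}
    (hqadd : ∀ u v, q (u + v) = q u + q v)
    (hqsmul : ∀ (a : ℝ) v, q (a • v) = a • q v)
    (hqidem : ∀ v, q (q v) = q v) (v : H) :
    (2:ℝ) • q ((2:ℝ) • q v - v) - ((2:ℝ) • q v - v) = v := by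
  have hqsub : ∀ x y, q (x - y) = q x - q y := by
    intro x y
    have h1 : x - y = x + (-1 : ℝ) • y := by module
    rw [h1, hqadd, hqsmul]
    module
  rw [hqsub, hqsmul, hqidem]
  module

private lemma refl_iso {q : H → H}
    (hqself : ∀ v, ⟪v, q v⟫ = ‖q v‖ ^ 2) (v : H) :
    ‖(2:ℝ) • q v - v‖ ^ 2 = ‖v‖ ^ 2 := by
  rw [norm_sub_sq_real, real_inner_smul_left, norm_smul]
  have h1 : ⟪q v, v⟫ = ‖q v‖ ^ 2 := by rw [real_inner_comm]; exact hqself v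
  rw [h1]
  simp [mul_pow]
  ring

-- averaged layer
private lemma a_fne {r1 r2 : H → H}
    (hr1iso : ∀ v, ‖r1 v‖ ^ 2 = ‖v‖ ^ 2) (hr2iso : ∀ v, ‖r2 v‖ ^ 2 = ‖v‖ ^ 2) (v : H) :
    ⟪v, (1/2 : ℝ) • (v + r2 (r1 v))⟫ = ‖(1/2 : ℝ) • (v + r2 (r1 v))‖ ^ 2 := by
  have hC : ‖r2 (r1 v)‖ ^ 2 = ‖v‖ ^ 2 := by rw [hr2iso, hr1iso]
  rw [real_inner_smul_right, inner_add_right, real_inner_self_eq_norm_sq,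
    norm_smul, mul_pow, norm_add_sq_real, hC]
  simp
  ring

private lemma a_ne {r1 r2 : H → H}
    (hr1iso : ∀ v, ‖r1 v‖ ^ 2 = ‖v‖ ^ 2) (hr2iso : ∀ v, ‖r2 v‖ ^ 2 = ‖v‖ ^ 2) (v : H) :
    ‖(1/2 : ℝ) • (v + r2 (r1 v))‖ ^ 2 ≤ ‖v‖ ^ 2 := by
  have h1 := a_fne hr1iso hr2iso v
  have h2 := real_inner_le_norm v ((1/2 : ℝ) • (v + r2 (r1 v)))
  have h3 := norm_nonneg ((1/2 : ℝ) • (v + r2 (r1 v)))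
  have h4 := norm_nonneg v
  nlinarith [h1, h2, h3, h4]

private lemma a_adj {r1 r2 : H → H}
    (hr1sa : ∀ u v, ⟪r1 u, v⟫ = ⟪u, r1 v⟫) (hr2sa : ∀ u v, ⟪r2 u, v⟫ = ⟪u, r2 v⟫) (u v : H) :
    ⟪(1/2 : ℝ) • (u + r1 (r2 u)), v⟫ = ⟪u, (1/2 : ℝ) • (v + r2 (r1 v))⟫ := by
  rw [real_inner_smul_left, real_inner_smul_right, inner_add_left, inner_add_right,
    hr1sa, hr2sa]


private lemma b_sa {aa aa' : H → H}
    (hadj : ∀ u v, ⟪aa' u, v⟫ = ⟪u, aa v⟫) (x y : H) :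
    ⟪aa' (aa x), y⟫ = ⟪x, aa' (aa y)⟫ := by
  rw [hadj, ← real_inner_comm x (aa' (aa y)), hadj (aa y) x]
  exact real_inner_comm _ _

private lemma b_inner_eq {aa aa' : H → H}
    (hadj : ∀ u v, ⟪aa' u, v⟫ = ⟪u, aa v⟫) (x : H) :
    ⟪x, aa' (aa x)⟫ = ‖aa x‖ ^ 2 := by
  rw [real_inner_comm, hadj, real_inner_self_eq_norm_sq]

private lemma b_1 {aa aa' : H → H}
    (hadj : ∀ u v, ⟪aa' u, v⟫ = ⟪u, aa v⟫)
    (hne : ∀ v, ‖aa v‖ ^ 2 ≤ ‖v‖ ^ 2) (x : H) :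
    ⟪x, aa' (aa x)⟫ ≤ ‖x‖ ^ 2 := by
  rw [b_inner_eq hadj]; exact hne x

private lemma b_2 {aa aa' : H → H}
    (hadj : ∀ u v, ⟪aa' u, v⟫ = ⟪u, aa v⟫)
    (hne' : ∀ v, ‖aa' v‖ ^ 2 ≤ ‖v‖ ^ 2) (x : H) :
    ‖aa' (aa x)‖ ^ 2 ≤ ⟪x, aa' (aa x)⟫ := by
  rw [b_inner_eq hadj]; exact hne' (aa x)

private lemma identity4 {aa aa' : H → H}
    (hadj : ∀ u v, ⟪aa' u, v⟫ = ⟪u, aa v⟫)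
    (hfne : ∀ v, ⟪v, aa v⟫ = ‖aa v‖ ^ 2)
    (hfne' : ∀ v, ⟪v, aa' v⟫ = ‖aa' v‖ ^ 2) (v : H) :
    2 * ⟪v, v - aa' (aa v)⟫
      = ‖v - aa' (aa v)‖ ^ 2 + ‖v - aa v‖ ^ 2 + ‖aa v - aa' (aa v)‖ ^ 2 := by
  have e1 : ⟪v, aa v⟫ = ‖aa v‖ ^ 2 := hfne v
  have e2 : ⟪aa v, aa' (aa v)⟫ = ‖aa' (aa v)‖ ^ 2 := hfne' (aa v)
  have n1 : ‖v - aa' (aa v)‖ ^ 2 = ‖v‖ ^ 2 - 2 * ⟪v, aa' (aa v)⟫ + ‖aa' (aa v)‖ ^ 2 :=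
    norm_sub_sq_real _ _
  have n2 : ‖v - aa v‖ ^ 2 = ‖v‖ ^ 2 - 2 * ⟪v, aa v⟫ + ‖aa v‖ ^ 2 := norm_sub_sq_real _ _
  have n3 : ‖aa v - aa' (aa v)‖ ^ 2
      = ‖aa v‖ ^ 2 - 2 * ⟪aa v, aa' (aa v)⟫ + ‖aa' (aa v)‖ ^ 2 := norm_sub_sq_real _ _
  have l1 : ⟪v, v - aa' (aa v)⟫ = ‖v‖ ^ 2 - ⟪v, aa' (aa v)⟫ := by
    rw [inner_sub_right, real_inner_self_eq_norm_sq]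
  rw [l1, n1, n2, n3, e1, e2]
  ring

private lemma c_fix {r1 r2 aa aa' : H → H}
    (haadef : ∀ v, aa v = (1/2 : ℝ) • (v + r2 (r1 v)))
    (hr1iso : ∀ v, ‖r1 v‖ ^ 2 = ‖v‖ ^ 2) (hr2iso : ∀ v, ‖r2 v‖ ^ 2 = ‖v‖ ^ 2)
    (hfne : ∀ v, ⟪v, aa v⟫ = ‖aa v‖ ^ 2)
    (hne : ∀ v, ‖aa v‖ ^ 2 ≤ ‖v‖ ^ 2) (hne' : ∀ v, ‖aa' v‖ ^ 2 ≤ ‖v‖ ^ 2)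
    {y : H} (hby : aa' (aa y) = y) : r2 (r1 y) = y := by
  have h1 : ‖aa y‖ ^ 2 ≤ ‖y‖ ^ 2 := hne y
  have h2 : ‖aa' (aa y)‖ ^ 2 ≤ ‖aa y‖ ^ 2 := hne' (aa y)
  rw [hby] at h2
  have heq : ‖aa y‖ ^ 2 = ‖y‖ ^ 2 := le_antisymm h1 h2
  have h3 : ⟪y, aa y⟫ = ‖y‖ ^ 2 := by rw [hfne y, heq]
  have h4 : ⟪y, r2 (r1 y)⟫ = ‖y‖ ^ 2 := by
    rw [haadef, real_inner_smul_right, inner_add_right, real_inner_self_eq_norm_sq] at h3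
    linarith
  have h5 : ‖r2 (r1 y) - y‖ ^ 2 = 0 := by
    rw [norm_sub_sq_real, hr2iso, hr1iso, real_inner_comm, h4]
    ring
  have h6 : r2 (r1 y) - y = 0 := by
    have h7 : ‖r2 (r1 y) - y‖ = 0 := by nlinarith [norm_nonneg (r2 (r1 y) - y), h5]
    exact norm_eq_zero.mp h7
  exact sub_eq_zero.mp h6


private lemma main_induction (bb : H → H)
    (hbadd : ∀ x y, bb (x + y) = bb x + bb y)
    (hbsmul : ∀ (a : ℝ) x, bb (a • x) = a • bb x)
    (hbsa : ∀ x y, ⟪bb x, y⟫ = ⟪x, bb y⟫)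
    (hb1 : ∀ x, ⟪x, bb x⟫ ≤ ‖x‖ ^ 2)
    (hb2 : ∀ x, ‖bb x‖ ^ 2 ≤ ⟪x, bb x⟫)
    (f : H) (z : ℕ → H) (t : ℕ → ℝ) (w0 : H)
    (hz0' : z 0 - f = bb w0)
    (hrec : ∀ k, z (k + 1) - f = (z k - f) - t k • ((z k - f) - bb (z k - f)))
    (hcases : ∀ k, (bb (z k - f) = z k - f ∧ t k = 1) ∨
      ((z k - f) - bb (z k - f) ≠ 0 ∧
        t k * ‖(z k - f) - bb (z k - f)‖ ^ 2 = ⟪z k - f, (z k - f) - bb (z k - f)⟫)) :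
    ∀ k j, ⟪z k - f, bb^[j] (z k - f)⟫ ≤ ⟪w0, bb^[j + 2 * k + 2] w0⟫ := by
  have hDD : ∀ (j : ℕ) (x : H), ⟪bb x, bb^[j] (bb x)⟫ = ⟪x, bb^[j + 2] x⟫ := by
    intro j x
    rw [hbsa,
      show bb (bb^[j] (bb x)) = bb^[j + 1] (bb x) from
        (Function.iterate_succ_apply' bb j (bb x)).symm,
      show bb^[j + 1] (bb x) = bb^[j + 2] x from (Function.iterate_succ_apply bb (j + 1) x).symm]
  have hit2 : ∀ (j : ℕ) (x : H), bb^[j + 2] x = bb^[j] (bb (bb x)) := by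
    intro j x
    rw [Function.iterate_add_apply bb j 2 x]
    have h22 : bb^[2] x = bb (bb x) := by
      rw [Function.iterate_succ_apply' bb 1 x, Function.iterate_one]
    rw [h22]
  intro k
  induction k with
  | zero =>
    intro j
    rw [hz0', hDD j w0, show j + 2 * 0 + 2 = j + 2 from by omega]
  | succ k ih =>
    intro j
    rcases hcases k with ⟨hfix, ht1⟩ | ⟨hδ, htk⟩
    · have hz1 : z (k + 1) - f = z k - f := by rw [hrec k, hfix, ht1]; simp
      rw [hz1]
      have e0 : ⟪z k - f, bb^[j] (z k - f)⟫ = ⟪z k - f, bb^[j + 2] (z k - f)⟫ := by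
        rw [hit2 j (z k - f), hfix, hfix]
      rw [e0]
      calc ⟪z k - f, bb^[j + 2] (z k - f)⟫ ≤ ⟪w0, bb^[(j + 2) + 2 * k + 2] w0⟫ := ih (j + 2)
        _ = ⟪w0, bb^[j + 2 * (k + 1) + 2] w0⟫ := by
            rw [show (j + 2) + 2 * k + 2 = j + 2 * (k + 1) + 2 from by omega]
    · have happ := lemL bb hbadd hbsmul hbsa hb1 hb2 (z k - f) (t k) hδ htk j
      rw [← hrec k] at happ
      calc ⟪z (k + 1) - f, bb^[j] (z (k + 1) - f)⟫
          ≤ ⟪bb (z k - f), bb^[j] (bb (z k - f))⟫ := happ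
        _ = ⟪z k - f, bb^[j + 2] (z k - f)⟫ := hDD j _
        _ ≤ ⟪w0, bb^[(j + 2) + 2 * k + 2] w0⟫ := ih (j + 2)
        _ = ⟪w0, bb^[j + 2 * (k + 1) + 2] w0⟫ := by
            rw [show (j + 2) + 2 * k + 2 = j + 2 * (k + 1) + 2 from by omega]


end helpersAll

/-- `P` is the nearest-point projector onto the set `S`. -/
def IsProjOn {H : Type*} [NormedAddCommGroup H] [InnerProductSpace ℝ H]
    (S : Set H) (P : H → H) : Prop :=
  ∀ x, P x ∈ S ∧ ∀ y ∈ S, ‖x - P x‖ ≤ ‖x - y‖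

/-- Accelerated symmetric Douglas–Rachford for affine subspaces: the accelerated
iterates `zₖ` satisfy `‖zₖ − P_{Fix T} x₀‖ ≤ ‖T^{k+1} x₀ − P_{Fix T} x₀‖`, and
moreover `max{‖P_{M₁} zₖ − P_M x₀‖, ‖P_{M₂} zₖ − P_M x₀‖} ≤ ‖zₖ − P_{Fix T} x₀‖`. -/
theorem accelerated_symmetric_dr
    {H : Type*} [NormedAddCommGroup H] [InnerProductSpace ℝ H] [CompleteSpace H]
    (M1 M2 : AffineSubspace ℝ H)
    (hM1 : IsClosed (M1 : Set H)) (hM2 : IsClosed (M2 : Set H))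
    (hne : ((M1 : Set H) ∩ (M2 : Set H)).Nonempty)
    (P1 P2 : H → H)
    (hP1 : IsProjOn (M1 : Set H) P1) (hP2 : IsProjOn (M2 : Set H) P2)
    (R1 R2 : H → H)
    (hR1 : ∀ x, R1 x = (2 : ℝ) • P1 x - x) (hR2 : ∀ x, R2 x = (2 : ℝ) • P2 x - x)
    (T12 T21 T : H → H)
    (hT12 : ∀ x, T12 x = ((1 : ℝ) / 2) • (x + R2 (R1 x)))
    (hT21 : ∀ x, T21 x = ((1 : ℝ) / 2) • (x + R1 (R2 x)))
    (hT : ∀ x, T x = T21 (T12 x))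
    (PFix : H → H)
    (hPFix : IsProjOn {y : H | T y = y} PFix)
    (PM : H → H)
    (hPM : IsProjOn ((M1 : Set H) ∩ (M2 : Set H)) PM)
    (x0 : H) (z : ℕ → H) (t : ℕ → ℝ)
    (hz0 : z 0 = T x0)
    (ht : ∀ k, (T (z k) ≠ z k →
        t k = 1 / 2 + (‖z k - T12 (z k)‖ ^ 2 + ‖T12 (z k) - T (z k)‖ ^ 2)
          / (2 * ‖z k - T (z k)‖ ^ 2)) ∧
      (T (z k) = z k → t k = 1))
    (hz : ∀ k, z (k + 1) = z k + t k • (T (z k) - z k)) :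
    ∀ k : ℕ, ‖z k - PFix x0‖ ≤ ‖T^[k + 1] x0 - PFix x0‖ ∧
      max ‖P1 (z k) - PM x0‖ ‖P2 (z k) - PM x0‖ ≤ ‖z k - PFix x0‖ := by
  obtain ⟨c, hc1, hc2⟩ := hne
  have hP1' : ∀ x, P1 x ∈ (M1 : Set H) ∧ ∀ y ∈ (M1 : Set H), ‖x - P1 x‖ ≤ ‖x - y‖ := hP1
  have hP2' : ∀ x, P2 x ∈ (M2 : Set H) ∧ ∀ y ∈ (M2 : Set H), ‖x - P2 x‖ ≤ ‖x - y‖ := hP2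
  -- vector-level projections
  obtain ⟨q1, hq1⟩ : ∃ q : H → H, q = fun v => P1 (c + v) - c := ⟨_, rfl⟩
  obtain ⟨q2, hq2⟩ : ∃ q : H → H, q = fun v => P2 (c + v) - c := ⟨_, rfl⟩
  have hq1dir : ∀ v, q1 v ∈ M1.direction := by rw [hq1]; exact fun v => proj_dir hP1' hc1 v
  have hq2dir : ∀ v, q2 v ∈ M2.direction := by rw [hq2]; exact fun v => proj_dir hP2' hc2 v
  have hq1add : ∀ u v, q1 (u + v) = q1 u + q1 v := by
    rw [hq1]; exact fun u v => proj_q_add hP1' hc1 u v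
  have hq2add : ∀ u v, q2 (u + v) = q2 u + q2 v := by
    rw [hq2]; exact fun u v => proj_q_add hP2' hc2 u v
  have hq1smul : ∀ (a : ℝ) v, q1 (a • v) = a • q1 v := by
    rw [hq1]; exact fun a v => proj_q_smul hP1' hc1 a v
  have hq2smul : ∀ (a : ℝ) v, q2 (a • v) = a • q2 v := by
    rw [hq2]; exact fun a v => proj_q_smul hP2' hc2 a v
  have hq1idem : ∀ v, q1 (q1 v) = q1 v := by
    rw [hq1]; exact fun v => proj_q_idem hP1' hc1 v
  have hq2idem : ∀ v, q2 (q2 v) = q2 v := by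
    rw [hq2]; exact fun v => proj_q_idem hP2' hc2 v
  have hq1sa : ∀ u v, ⟪q1 u, v⟫ = ⟪u, q1 v⟫ := by
    rw [hq1]; exact fun u v => proj_q_sa hP1' hc1 u v
  have hq2sa : ∀ u v, ⟪q2 u, v⟫ = ⟪u, q2 v⟫ := by
    rw [hq2]; exact fun u v => proj_q_sa hP2' hc2 u v
  have hq1self : ∀ v, ⟪v, q1 v⟫ = ‖q1 v‖ ^ 2 := by
    rw [hq1]; exact fun v => proj_q_inner_self hP1' hc1 v
  have hq2self : ∀ v, ⟪v, q2 v⟫ = ‖q2 v‖ ^ 2 := by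
    rw [hq2]; exact fun v => proj_q_inner_self hP2' hc2 v
  have hq1pyth : ∀ v, ‖q1 v‖ ^ 2 + ‖v - q1 v‖ ^ 2 = ‖v‖ ^ 2 := by
    rw [hq1]; exact fun v => proj_q_pyth hP1' hc1 v
  -- reflections
  obtain ⟨rr1, hrr1⟩ : ∃ r : H → H, r = fun v => (2 : ℝ) • q1 v - v := ⟨_, rfl⟩
  obtain ⟨rr2, hrr2⟩ : ∃ r : H → H, r = fun v => (2 : ℝ) • q2 v - v := ⟨_, rfl⟩
  have hrr1sa : ∀ u v, ⟪rr1 u, v⟫ = ⟪u, rr1 v⟫ := by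
    rw [hrr1]; exact fun u v => refl_sa hq1sa u v
  have hrr2sa : ∀ u v, ⟪rr2 u, v⟫ = ⟪u, rr2 v⟫ := by
    rw [hrr2]; exact fun u v => refl_sa hq2sa u v
  have hrr1iso : ∀ v, ‖rr1 v‖ ^ 2 = ‖v‖ ^ 2 := by
    rw [hrr1]; exact fun v => refl_iso hq1self v
  have hrr2iso : ∀ v, ‖rr2 v‖ ^ 2 = ‖v‖ ^ 2 := by
    rw [hrr2]; exact fun v => refl_iso hq2self v
  have hrr2invol : ∀ v, rr2 (rr2 v) = v := by
    rw [hrr2]; exact fun v => refl_invol hq2add hq2smul hq2idem v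
  have hrr1add : ∀ u v, rr1 (u + v) = rr1 u + rr1 v := by
    intro u v; rw [hrr1]; simp only; rw [hq1add]; module
  have hrr2add : ∀ u v, rr2 (u + v) = rr2 u + rr2 v := by
    intro u v; rw [hrr2]; simp only; rw [hq2add]; module
  have hrr1smul : ∀ (a : ℝ) v, rr1 (a • v) = a • rr1 v := by
    intro a v; rw [hrr1]; simp only; rw [hq1smul]; module
  have hrr2smul : ∀ (a : ℝ) v, rr2 (a • v) = a • rr2 v := by
    intro a v; rw [hrr2]; simp only; rw [hq2smul]; module
  -- averaged maps
  obtain ⟨aa, haa⟩ : ∃ a : H → H, a = fun v => (1/2 : ℝ) • (v + rr2 (rr1 v)) := ⟨_, rfl⟩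
  obtain ⟨aa', haa'⟩ : ∃ a : H → H, a = fun v => (1/2 : ℝ) • (v + rr1 (rr2 v)) := ⟨_, rfl⟩
  have haadd : ∀ u v, aa (u + v) = aa u + aa v := by
    intro u v; rw [haa]; simp only; rw [hrr1add, hrr2add]; module
  have ha'add : ∀ u v, aa' (u + v) = aa' u + aa' v := by
    intro u v; rw [haa']; simp only; rw [hrr2add, hrr1add]; module
  have hasmul : ∀ (a : ℝ) v, aa (a • v) = a • aa v := by
    intro a v; rw [haa]; simp only; rw [hrr1smul, hrr2smul]; module
  have ha'smul : ∀ (a : ℝ) v, aa' (a • v) = a • aa' v := by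
    intro a v; rw [haa']; simp only; rw [hrr2smul, hrr1smul]; module
  have hafne : ∀ v, ⟪v, aa v⟫ = ‖aa v‖ ^ 2 := by
    rw [haa]; exact fun v => a_fne hrr1iso hrr2iso v
  have ha'fne : ∀ v, ⟪v, aa' v⟫ = ‖aa' v‖ ^ 2 := by
    rw [haa']; exact fun v => a_fne hrr2iso hrr1iso v
  have hane : ∀ v, ‖aa v‖ ^ 2 ≤ ‖v‖ ^ 2 := by
    rw [haa]; exact fun v => a_ne hrr1iso hrr2iso v
  have ha'ne : ∀ v, ‖aa' v‖ ^ 2 ≤ ‖v‖ ^ 2 := by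
    rw [haa']; exact fun v => a_ne hrr2iso hrr1iso v
  have haadj : ∀ u v, ⟪aa' u, v⟫ = ⟪u, aa v⟫ := by
    rw [haa, haa']; exact fun u v => a_adj hrr1sa hrr2sa u v
  -- the operator bb
  obtain ⟨bb, hbb⟩ : ∃ b : H → H, b = fun v => aa' (aa v) := ⟨_, rfl⟩
  have hbadd : ∀ u v, bb (u + v) = bb u + bb v := by
    intro u v; rw [hbb]; simp only; rw [haadd, ha'add]
  have hbsmul : ∀ (a : ℝ) v, bb (a • v) = a • bb v := by
    intro a v; rw [hbb]; simp only; rw [hasmul, ha'smul]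
  have hbsub : ∀ u v, bb (u - v) = bb u - bb v := by
    intro u v
    have h1 : u - v = u + (-1 : ℝ) • v := by module
    rw [h1, hbadd, hbsmul]; module
  have hbsa : ∀ x y, ⟪bb x, y⟫ = ⟪x, bb y⟫ := by
    rw [hbb]; exact fun x y => b_sa haadj x y
  have hb1 : ∀ x, ⟪x, bb x⟫ ≤ ‖x‖ ^ 2 := by
    rw [hbb]; exact fun x => b_1 haadj hane x
  have hb2 : ∀ x, ‖bb x‖ ^ 2 ≤ ⟪x, bb x⟫ := by
    rw [hbb]; exact fun x => b_2 haadj ha'ne x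
  have hid4 : ∀ v, 2 * ⟪v, v - bb v⟫
      = ‖v - bb v‖ ^ 2 + ‖v - aa v‖ ^ 2 + ‖aa v - bb v‖ ^ 2 := by
    rw [hbb]; exact fun v => identity4 haadj hafne ha'fne v
  have hcfix : ∀ y : H, bb y = y → rr2 (rr1 y) = y := by
    intro y hy
    rw [hbb] at hy
    exact c_fix (fun v => by rw [haa]) hrr1iso hrr2iso hafne hane ha'ne hy
  -- relations between the given maps and the vector maps
  have hP1eq : ∀ x, P1 x = c + q1 (x - c) := by
    intro x
    rw [hq1]; simp only
    rw [show c + (x - c) = x from by abel]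
    abel
  have hP2eq : ∀ x, P2 x = c + q2 (x - c) := by
    intro x
    rw [hq2]; simp only
    rw [show c + (x - c) = x from by abel]
    abel
  have hR1eq : ∀ x, R1 x = c + rr1 (x - c) := by
    intro x
    rw [hR1 x, hP1eq x, hrr1]; simp only
    module
  have hR2eq : ∀ x, R2 x = c + rr2 (x - c) := by
    intro x
    rw [hR2 x, hP2eq x, hrr2]; simp only
    module
  have hT12eq : ∀ x, T12 x = c + aa (x - c) := by
    intro x
    rw [hT12 x, hR1eq x, hR2eq (c + rr1 (x - c)),
      show c + rr1 (x - c) - c = rr1 (x - c) from by abel, haa]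
    simp only
    module
  have hT21eq : ∀ x, T21 x = c + aa' (x - c) := by
    intro x
    rw [hT21 x, hR2eq x, hR1eq (c + rr2 (x - c)),
      show c + rr2 (x - c) - c = rr2 (x - c) from by abel, haa']
    simp only
    module
  have hTeq : ∀ x, T x = c + bb (x - c) := by
    intro x
    rw [hT x, hT12eq x, hT21eq (c + aa (x - c)),
      show c + aa (x - c) - c = aa (x - c) from by abel, hbb]
  -- fixed points
  have hTf : T (PFix x0) = PFix x0 := (hPFix x0).1
  obtain ⟨f, hfdef⟩ : ∃ f : H, f = PFix x0 := ⟨_, rfl⟩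
  rw [← hfdef] at hTf
  have hbf : bb (f - c) = f - c := by
    have h := hTeq f
    rw [hTf] at h
    have := (sub_eq_iff_eq_add').mpr h
    exact this.symm
  have hCf : rr2 (rr1 (f - c)) = f - c := hcfix _ hbf
  have haf : aa (f - c) = f - c := by
    rw [haa]; simp only
    rw [hCf]; module
  have hT12f : T12 f = f := by
    rw [hT12eq f, haf]; abel
  have hT21f : T21 f = f := by
    have h := hT f
    rw [hT12f, hTf] at h
    exact h.symm
  -- recentering at f
  have hTz : ∀ x, T x = f + bb (x - f) := by
    intro x
    rw [hTeq x, show x - c = (x - f) + (f - c) from by abel, hbadd, hbf]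
    abel
  have hT12z : ∀ x, T12 x = f + aa (x - f) := by
    intro x
    rw [hT12eq x, show x - c = (x - f) + (f - c) from by abel, haadd, haf]
    abel
  -- the intersection projection point g
  obtain ⟨g, hgdef⟩ : ∃ g : H, g = PM x0 := ⟨_, rfl⟩
  have hgmem : g ∈ (M1 : Set H) ∩ (M2 : Set H) := by rw [hgdef]; exact (hPM x0).1
  have hg1 : g ∈ (M1 : Set H) := hgmem.1
  have hg2 : g ∈ (M2 : Set H) := hgmem.2
  have hq1g : q1 (g - c) = g - c := by
    rw [hq1]; simp only
    rw [show c + (g - c) = g from by abel, proj_self hP1' hg1]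
  have hq2g : q2 (g - c) = g - c := by
    rw [hq2]; simp only
    rw [show c + (g - c) = g from by abel, proj_self hP2' hg2]
  have hrr1g : rr1 (g - c) = g - c := by
    rw [hrr1]; simp only; rw [hq1g]; module
  have hrr2g : rr2 (g - c) = g - c := by
    rw [hrr2]; simp only; rw [hq2g]; module
  have hbg : bb (g - c) = g - c := by
    rw [hbb]; simp only
    rw [haa]; simp only
    rw [hrr1g, hrr2g, show (1/2 : ℝ) • ((g - c) + (g - c)) = g - c from by module, haa']
    simp only
    rw [hrr2g, hrr1g]; module
  have hbh : bb (f - g) = f - g := by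
    rw [show f - g = (f - c) - (g - c) from by abel, hbsub, hbf, hbg]
  have hCh : rr2 (rr1 (f - g)) = f - g := hcfix _ hbh
  have hrr12h : rr1 (f - g) = rr2 (f - g) := by
    have h := congrArg rr2 hCh
    rw [hrr2invol] at h
    exact h
  have hq12h : q1 (f - g) = q2 (f - g) := by
    have e1 : q1 (f - g) = (1/2 : ℝ) • ((f - g) + rr1 (f - g)) := by
      rw [hrr1]; simp only; module
    have e2 : q2 (f - g) = (1/2 : ℝ) • ((f - g) + rr2 (f - g)) := by
      rw [hrr2]; simp only; module
    rw [e1, e2, hrr12h]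
  -- s := q1 (f - g) is in both directions and fixed by bb
  have hsdir1 : q1 (f - g) ∈ M1.direction := hq1dir _
  have hsdir2 : q1 (f - g) ∈ M2.direction := by rw [hq12h]; exact hq2dir _
  have hq1s : q1 (q1 (f - g)) = q1 (f - g) := hq1idem _
  have hq2s : q2 (q1 (f - g)) = q1 (f - g) := by
    rw [hq12h, hq2idem]
  have hbs : bb (q1 (f - g)) = q1 (f - g) := by
    have hr1s : rr1 (q1 (f - g)) = q1 (f - g) := by
      rw [hrr1]; simp only; rw [hq1s]; module
    have hr2s : rr2 (q1 (f - g)) = q1 (f - g) := by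
      rw [hrr2]; simp only; rw [hq2s]; module
    rw [hbb]; simp only
    rw [haa]; simp only
    rw [hr1s, hr2s, show (1/2 : ℝ) • (q1 (f - g) + q1 (f - g)) = q1 (f - g) from by module,
      haa']
    simp only
    rw [hr2s, hr1s]; module
  -- orthogonality relations
  have hfs : ⟪x0 - f, q1 (f - g)⟫ = 0 := by
    apply perp_of_min'
    intro ε
    have hmem : f + ε • q1 (f - g) ∈ {y : H | T y = y} := by
      simp only [Set.mem_setOf_eq]
      rw [hTz (f + ε • q1 (f - g)), show f + ε • q1 (f - g) - f = ε • q1 (f - g) from by abel,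
        hbsmul, hbs]
    have := (hPFix x0).2 _ hmem
    rw [← hfdef] at this
    exact this
  have hgs : ⟪x0 - g, q1 (f - g)⟫ = 0 := by
    apply perp_of_min'
    intro ε
    have hmem : g + ε • q1 (f - g) ∈ (M1 : Set H) ∩ (M2 : Set H) := by
      constructor
      · have h1 : (ε • q1 (f - g)) +ᵥ g ∈ M1 :=
          AffineSubspace.vadd_mem_of_mem_direction (M1.direction.smul_mem ε hsdir1) hg1
        simpa [vadd_eq_add, add_comm] using h1
      · have h1 : (ε • q1 (f - g)) +ᵥ g ∈ M2 :=
          AffineSubspace.vadd_mem_of_mem_direction (M2.direction.smul_mem ε hsdir2) hg2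
        simpa [vadd_eq_add, add_comm] using h1
    have := (hPM x0).2 _ hmem
    rw [← hgdef] at this
    exact this
  have hs0 : q1 (f - g) = 0 := by
    have h1 : ⟪f - g, q1 (f - g)⟫ = 0 := by
      have e : ⟪(x0 - g) - (x0 - f), q1 (f - g)⟫ = 0 := by
        rw [inner_sub_left, hfs, hgs, sub_zero]
      rw [show x0 - g - (x0 - f) = f - g from by abel] at e
      exact e
    have h2 : ⟪f - g, q1 (f - g)⟫ = ‖q1 (f - g)‖ ^ 2 := hq1self _
    have h3 : ‖q1 (f - g)‖ = 0 := by
      have := h2 ▸ h1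
      nlinarith [norm_nonneg (q1 (f - g))]
    exact norm_eq_zero.mp h3
  have hs0' : q2 (f - g) = 0 := by rw [← hq12h]; exact hs0
  -- part 2 bounds
  have hq1sub : ∀ u v, q1 (u - v) = q1 u - q1 v := by
    intro u v
    have h1 : u - v = u + (-1 : ℝ) • v := by module
    rw [h1, hq1add, hq1smul]; module
  have hq2sub : ∀ u v, q2 (u - v) = q2 u - q2 v := by
    intro u v
    have h1 : u - v = u + (-1 : ℝ) • v := by module
    rw [h1, hq2add, hq2smul]; module
  have hq2pyth : ∀ v, ‖q2 v‖ ^ 2 + ‖v - q2 v‖ ^ 2 = ‖v‖ ^ 2 := by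
    rw [hq2]; exact fun v => proj_q_pyth hP2' hc2 v
  have hpart2a : ∀ y : H, ‖P1 y - g‖ ≤ ‖y - f‖ := by
    intro y
    have e1 : P1 y - g = q1 (y - g) := by
      rw [hP1eq y, show y - g = (y - c) - (g - c) from by abel, hq1sub (y - c) (g - c), hq1g]
      abel
    have e2 : q1 (y - f) = q1 (y - g) := by
      rw [show y - f = (y - g) - (f - g) from by abel, hq1sub (y - g) (f - g), hs0, sub_zero]
    have e3 := hq1pyth (y - f)
    rw [e2] at e3
    have e4 : ‖q1 (y - g)‖ ^ 2 ≤ ‖y - f‖ ^ 2 := by nlinarith [sq_nonneg ‖(y - f) - q1 (y - g)‖]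
    rw [e1]
    nlinarith [norm_nonneg (q1 (y - g)), norm_nonneg (y - f), e4]
  have hpart2b : ∀ y : H, ‖P2 y - g‖ ≤ ‖y - f‖ := by
    intro y
    have e1 : P2 y - g = q2 (y - g) := by
      rw [hP2eq y, show y - g = (y - c) - (g - c) from by abel, hq2sub (y - c) (g - c), hq2g]
      abel
    have e2 : q2 (y - f) = q2 (y - g) := by
      rw [show y - f = (y - g) - (f - g) from by abel, hq2sub (y - g) (f - g), hs0', sub_zero]
    have e3 := hq2pyth (y - f)
    rw [e2] at e3
    have e4 : ‖q2 (y - g)‖ ^ 2 ≤ ‖y - f‖ ^ 2 := by nlinarith [sq_nonneg ‖(y - f) - q2 (y - g)‖]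
    rw [e1]
    nlinarith [norm_nonneg (q2 (y - g)), norm_nonneg (y - f), e4]
  -- dynamics in recentered coordinates
  have hrec : ∀ k, z (k + 1) - f = (z k - f) - t k • ((z k - f) - bb (z k - f)) := by
    intro k
    rw [hz k, hTz (z k)]
    module
  have hz0' : z 0 - f = bb (x0 - f) := by
    rw [hz0, hTz x0]
    abel
  have hcases : ∀ k, (bb (z k - f) = z k - f ∧ t k = 1) ∨
      ((z k - f) - bb (z k - f) ≠ 0 ∧
        t k * ‖(z k - f) - bb (z k - f)‖ ^ 2 = ⟪z k - f, (z k - f) - bb (z k - f)⟫) := by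
    intro k
    by_cases hcase : T (z k) = z k
    · left
      constructor
      · have h := hTz (z k)
        rw [hcase] at h
        exact ((sub_eq_iff_eq_add').mpr h).symm
      · exact (ht k).2 hcase
    · right
      have e1 : z k - T (z k) = (z k - f) - bb (z k - f) := by rw [hTz (z k)]; abel
      have hne0 : (z k - f) - bb (z k - f) ≠ 0 := by
        rw [← e1]
        intro h0
        exact hcase (sub_eq_zero.mp h0).symm
      refine ⟨hne0, ?_⟩
      have hfor := (ht k).1 hcase
      have e2 : z k - T12 (z k) = (z k - f) - aa (z k - f) := by rw [hT12z (z k)]; abel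
      have e3 : T12 (z k) - T (z k) = aa (z k - f) - bb (z k - f) := by
        rw [hT12z (z k), hTz (z k)]; abel
      rw [e1, e2, e3] at hfor
      have hid := hid4 (z k - f)
      have hpos : (0:ℝ) < ‖(z k - f) - bb (z k - f)‖ ^ 2 := by
        have := norm_pos_iff.mpr hne0
        positivity
      rw [hfor]
      have h2 : (1 / 2 + (‖(z k - f) - aa (z k - f)‖ ^ 2 + ‖aa (z k - f) - bb (z k - f)‖ ^ 2)
            / (2 * ‖(z k - f) - bb (z k - f)‖ ^ 2)) * ‖(z k - f) - bb (z k - f)‖ ^ 2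
          = (‖(z k - f) - bb (z k - f)‖ ^ 2 + (‖(z k - f) - aa (z k - f)‖ ^ 2
            + ‖aa (z k - f) - bb (z k - f)‖ ^ 2)) / 2 := by
        field_simp
      rw [h2]
      linarith [hid]
  have hmain := main_induction bb hbadd hbsmul hbsa hb1 hb2 f z t (x0 - f) hz0' hrec hcases
  have hTw : ∀ n : ℕ, T^[n] x0 - f = bb^[n] (x0 - f) := by
    intro n
    induction n with
    | zero => simp
    | succ n ih =>
      rw [Function.iterate_succ_apply' T n x0, hTz (T^[n] x0),
        show f + bb (T^[n] x0 - f) - f = bb (T^[n] x0 - f) from by abel, ih,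
        ← Function.iterate_succ_apply' bb n (x0 - f)]
  have hpart1 : ∀ k, ‖z k - f‖ ≤ ‖T^[k + 1] x0 - f‖ := by
    intro k
    have h0 := hmain k 0
    have hL : ⟪z k - f, bb^[0] (z k - f)⟫ = ‖z k - f‖ ^ 2 := by
      simp [real_inner_self_eq_norm_sq]
    have hR : ⟪x0 - f, bb^[0 + 2 * k + 2] (x0 - f)⟫ = ‖T^[k + 1] x0 - f‖ ^ 2 := by
      rw [hTw (k + 1),
        show (0 + 2 * k + 2) = (k + 1) + (k + 1) from by omega,
        Function.iterate_add_apply bb (k + 1) (k + 1) (x0 - f),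
        ← iter_sa' bb hbsa (k + 1) (x0 - f) (bb^[k + 1] (x0 - f)),
        real_inner_self_eq_norm_sq]
    rw [hL, hR] at h0
    nlinarith [norm_nonneg (z k - f), norm_nonneg (T^[k + 1] x0 - f), h0]
  intro k
  constructor
  · rw [← hfdef]
    exact hpart1 k
  · rw [← hfdef, ← hgdef]
    exact max_le (hpart2a (z k)) (hpart2b (z k))
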